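/- For every real number α and every natural number n, applying the matrix (U_a(α))^n · U_c · (U_a(α))^n to the standard basis vector e₀ of ℝ⁴ yields exactly the standard basis vector e₂ (i.e., when the two exponents are equal, the resulting state is e₂ with certainty). -/
import Mathlib


open Real Matrix

/-- The matrix `U_a(α)` from the paper. -/
noncomputable def Ua (α : ℝ) : Matrix (Fin 4) (Fin 4) ℝ :=
  !![Real.cos α, -Real.sin α, 0, 0;
     Real.sin α,  Real.cos α, 0, 0;
     0, 0,  Real.cos α, Real.sin α;
     0, 0, -Real.sin α, Real.cos α]

/-- The matrix `U_c` from the paper. -/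
def Uc : Matrix (Fin 4) (Fin 4) ℝ :=
  !![0, 0, 1, 0;
     0, 0, 0, 1;
     1, 0, 0, 0;
     0, 1, 0, 0]

/-- The standard basis vectors of `ℝ⁴`. -/
noncomputable def e (i : Fin 4) : Fin 4 → ℝ := Pi.single i 1

lemma Ua_mul (α β : ℝ) : Ua α * Ua β = Ua (α + β) := by
  simp only [Ua]
  ext i j
  fin_cases i <;> fin_cases j <;>
    simp [Matrix.mul_apply, Fin.sum_univ_four, Real.cos_add, Real.sin_add,
      Matrix.vecHead, Matrix.vecTail] <;> ring

lemma Ua_pow (α : ℝ) (n : ℕ) : (Ua α) ^ n = Ua (n * α) := by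
  induction n with
  | zero =>
    simp only [pow_zero, Nat.cast_zero, zero_mul]
    ext i j
    fin_cases i <;> fin_cases j <;>
      simp [Ua, Matrix.one_apply, Matrix.vecHead, Matrix.vecTail]
  | succ n ih =>
    rw [pow_succ, ih, Ua_mul]
    push_cast; ring_nf

theorem equal_exponents_give_e2 (α : ℝ) (n : ℕ) :
    ((Ua α) ^ n * Uc * (Ua α) ^ n).mulVec (e 0) = e 2 := by
  rw [Ua_pow]
  set β := (n : ℝ) * α
  funext i
  fin_cases i <;>
    simp [Ua, Uc, e, Matrix.mulVec, Matrix.mul_apply, Fin.sum_univ_four, dotProduct,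
      Pi.single_apply] <;> ring_nf <;>
    simp [Real.sin_sq_add_cos_sq, Real.cos_sq_add_sin_sq]
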